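/- Let G' be a vertex-minor of G obtained by deleting a set D of vertices and contracting a set C of vertices. Then two vertices u, v of G' are adjacent in G' if and only if there is a path in G from u to v all of whose inner vertices lie in C. -/

import Mathlib

/-- Deletion of a vertex `v`: the deleted vertex is kept but made isolated. -/
def delV {V : Type*} (G : SimpleGraph V) (v : V) : SimpleGraph V where
  Adj a b := a ≠ v ∧ b ≠ v ∧ G.Adj a b
  symm := by constructor; rintro a b ⟨h1, h2, h3⟩; exact ⟨h2, h1, h3.symm⟩
  loopless := by constructor; rintro a ⟨-, -, h⟩; exact G.irrefl h

/-- Contraction of a vertex `v`: `v` is removed (kept isolated) and its neighborhood is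
turned into a clique. -/
def conV {V : Type*} (G : SimpleGraph V) (v : V) : SimpleGraph V where
  Adj a b := a ≠ v ∧ b ≠ v ∧ a ≠ b ∧ (G.Adj a b ∨ (G.Adj a v ∧ G.Adj v b))
  symm := by
    constructor
    rintro a b ⟨h1, h2, h3, h4 | ⟨h4, h5⟩⟩
    exacts [⟨h2, h1, h3.symm, Or.inl h4.symm⟩, ⟨h2, h1, h3.symm, Or.inr ⟨h5.symm, h4.symm⟩⟩]
  loopless := by constructor; rintro a ⟨-, -, h, -⟩; exact h rfl

open SimpleGraph in
lemma delV_foldr_adj {V : Type*} (G : SimpleGraph V) (D : List V) (a b : V) :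
    (D.foldr (fun d H => delV H d) G).Adj a b ↔ a ∉ D ∧ b ∉ D ∧ G.Adj a b := by
  induction D with
  | nil => simp
  | cons d D ih =>
    simp only [List.foldr_cons, List.mem_cons, not_or]
    show (_ ≠ _ ∧ _ ≠ _ ∧ _) ↔ _
    rw [ih]
    tauto

open SimpleGraph in
lemma conV_foldr_adj {V : Type*} [DecidableEq V] (H : SimpleGraph V) (C : List V) (a b : V) :
    (C.foldr (fun c K => conV K c) H).Adj a b ↔
      a ∉ C ∧ b ∉ C ∧ a ≠ b ∧ ∃ p : H.Walk a b,
        ∀ w ∈ p.support, w ≠ a → w ≠ b → w ∈ C := by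
  induction C generalizing a b with
  | nil =>
    simp only [List.foldr_nil, List.not_mem_nil, not_false_iff, true_and]
    constructor
    · intro h
      refine ⟨h.ne, Walk.cons h Walk.nil, ?_⟩
      intro w hw hwa hwb
      simp only [Walk.support_cons, Walk.support_nil, List.mem_cons,
        List.mem_singleton, List.not_mem_nil] at hw
      rcases hw with h1 | h1 | h1
      · exact absurd h1 hwa
      · exact absurd h1 hwb
      · exact absurd h1 (by simp)
    · rintro ⟨hne, p, hp⟩
      cases p with
      | nil => exact absurd rfl hne
      | @cons _ x _ h q =>
        have hx : x = b := by
          by_contra hxb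
          by_cases hxa : x = a
          · subst hxa; exact H.irrefl h
          · exact (hp x (by simp [Walk.support_cons]) hxa hxb)
        subst hx; exact h
  | cons c C ih =>
    simp only [List.foldr_cons, List.mem_cons, not_or]
    show (a ≠ c ∧ b ≠ c ∧ a ≠ b ∧ (_ ∨ (_ ∧ _))) ↔ _
    constructor
    · rintro ⟨hac, hbc, hab, h | ⟨h1, h2⟩⟩
      · obtain ⟨haC, hbC, -, p, hp⟩ := (ih a b).mp h
        exact ⟨⟨hac, haC⟩, ⟨hbc, hbC⟩, hab, p,
          fun w hw hwa hwb => Or.inr (hp w hw hwa hwb)⟩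
      · obtain ⟨haC, hcC, hac', p, hp⟩ := (ih a c).mp h1
        obtain ⟨-, hbC, hcb, q, hq⟩ := (ih c b).mp h2
        refine ⟨⟨hac, haC⟩, ⟨hbc, hbC⟩, hab, p.append q, ?_⟩
        intro w hw hwa hwb
        rw [Walk.support_append, List.mem_append] at hw
        by_cases hwc : w = c
        · exact Or.inl hwc
        rcases hw with hw | hw
        · exact Or.inr (hp w hw hwa hwc)
        · exact Or.inr (hq w (List.mem_of_mem_tail hw) hwc hwb)
    · rintro ⟨haC', hbC', hab, p, hp⟩
      obtain ⟨hac, haC⟩ := haC'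
      obtain ⟨hbc, hbC⟩ := hbC'
      refine ⟨hac, hbc, hab, ?_⟩
      by_cases hcC : c ∈ C
      · refine Or.inl ((ih a b).mpr ⟨haC, hbC, hab, p, ?_⟩)
        intro w hw hwa hwb
        rcases hp w hw hwa hwb with h | h
        · exact h ▸ hcC
        · exact h
      · set p' := p.bypass with hp'def
        have hp'path : p'.IsPath := Walk.bypass_isPath p
        have hsub : ∀ w ∈ p'.support, w ∈ p.support :=
          fun w hw => Walk.support_bypass_subset p hw
        have hp' : ∀ w ∈ p'.support, w ≠ a → w ≠ b → w = c ∨ w ∈ C :=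
          fun w hw hwa hwb => hp w (hsub w hw) hwa hwb
        by_cases hc : c ∈ p'.support
        · set q := p'.takeUntil c hc with hq
          set r := p'.dropUntil c hc with hr
          have hspec : q.append r = p' := Walk.take_spec p' hc
          have hnodup : (q.support ++ r.support.tail).Nodup := by
            rw [← Walk.support_append, hspec]
            exact hp'path.support_nodup
          have hdisj := (List.nodup_append.mp hnodup).2.2
          refine Or.inr ⟨(ih a c).mpr ⟨haC, hcC, hac, q, ?_⟩,
            (ih c b).mpr ⟨hcC, hbC, fun h => hbc h.symm, r, ?_⟩⟩
          · intro w hw hwa hwc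
            have hwp' : w ∈ p'.support := Walk.support_takeUntil_subset p' hc hw
            have hwb : w ≠ b := by
              intro hwb; subst hwb
              have hbr : w ∈ r.support := Walk.end_mem_support r
              have : w ∈ r.support.tail := by
                rw [Walk.support_eq_cons r] at hbr
                exact (List.mem_cons.mp hbr).resolve_left hwc
              exact hdisj _ hw _ this rfl
            rcases hp' w hwp' hwa hwb with h | h
            · exact absurd h hwc
            · exact h
          · intro w hw hwc hwb
            have hwp' : w ∈ p'.support := Walk.support_dropUntil_subset p' hc hw
            have hwa : w ≠ a := by
              intro hwa; subst hwa
              have : w ∈ r.support.tail := by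
                rw [Walk.support_eq_cons r] at hw
                exact (List.mem_cons.mp hw).resolve_left hwc
              exact hdisj _ (Walk.start_mem_support q) _ this rfl
            rcases hp' w hwp' hwa hwb with h | h
            · exact absurd h hwc
            · exact h
        · refine Or.inl ((ih a b).mpr ⟨haC, hbC, hab, p', ?_⟩)
          intro w hw hwa hwb
          rcases hp' w hw hwa hwb with h | h
          · exact absurd (h ▸ hw) hc
          · exact h

/-- In the vertex-minor of `G` obtained by deleting the vertices of `D` and contracting the
vertices of `C`, two (remaining) vertices `u` and `v` are adjacent if and only if there is a
path in `G` from `u` to `v` all of whose inner vertices lie in `C`. -/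
theorem stmt2 {V : Type*} (G : SimpleGraph V) (D C : List V)
    (hDC : ∀ x ∈ D, x ∉ C)
    (G' : SimpleGraph V)
    (hG' : G' = C.foldr (fun c H => conV H c) (D.foldr (fun d H => delV H d) G))
    (u v : V) (huD : u ∉ D) (huC : u ∉ C) (hvD : v ∉ D) (hvC : v ∉ C) :
    G'.Adj u v ↔ u ≠ v ∧ ∃ p : G.Walk u v, p.IsPath ∧
      ∀ w ∈ p.support, w ≠ u → w ≠ v → w ∈ C := by
  classical
  set H := D.foldr (fun d K => delV K d) G with hH
  have hHG : H ≤ G := by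
    intro a b hab
    exact ((delV_foldr_adj G D a b).mp hab).2.2
  rw [hG', conV_foldr_adj]
  constructor
  · rintro ⟨-, -, huv, p, hp⟩
    refine ⟨huv, ?_⟩
    have hedges : ∀ e ∈ p.edges, e ∈ G.edgeSet := fun e he =>
      SimpleGraph.edgeSet_mono hHG (p.edges_subset_edgeSet he)
    set q := (p.transfer G hedges).bypass with hq
    refine ⟨q, SimpleGraph.Walk.bypass_isPath _, ?_⟩
    intro w hw hwu hwv
    have : w ∈ (p.transfer G hedges).support :=
      SimpleGraph.Walk.support_bypass_subset _ hw
    rw [SimpleGraph.Walk.support_transfer] at this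
    exact hp w this hwu hwv
  · rintro ⟨huv, p, hpath, hp⟩
    refine ⟨huC, hvC, huv, ?_⟩
    have hedges : ∀ e ∈ p.edges, e ∈ H.edgeSet := by
      intro e he
      induction e using Sym2.ind with
      | _ x y =>
        rw [SimpleGraph.mem_edgeSet, hH, delV_foldr_adj]
        have hx : x ∈ p.support := p.fst_mem_support_of_mem_edges he
        have hy : y ∈ p.support := p.snd_mem_support_of_mem_edges he
        have hnotD : ∀ z ∈ p.support, z ∉ D := by
          intro z hz hzD
          by_cases hzu : z = u
          · exact huD (hzu ▸ hzD)
          by_cases hzv : z = v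
          · exact hvD (hzv ▸ hzD)
          exact hDC z hzD (hp z hz hzu hzv)
        exact ⟨hnotD x hx, hnotD y hy, p.adj_of_mem_edges he⟩
    refine ⟨p.transfer H hedges, ?_⟩
    intro w hw hwu hwv
    rw [SimpleGraph.Walk.support_transfer] at hw
    exact hp w hw hwu hwv
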